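/- arXiv:2308.03715 — 3 statements merged into one kernel-verified Lean document; each statement's English description precedes it below -/
import Mathlib

section
/- For every n with 2 ≤ n ≤ N+1, the L1 coefficients are monotone in the second index: T̂_{n,j} ≥ T̂_{n,j−1} for all j with 2 ≤ j ≤ n−1. -/
/-- Graded temporal mesh `t_n = T ((n-1)/N)^r`. -/
noncomputable def tmesh (T r : ℝ) (N n : ℕ) : ℝ := T * (((n : ℝ) - 1) / (N : ℝ)) ^ r

/-- Step sizes `τ_n = t_{n+1} - t_n`. -/
noncomputable def tau (T r : ℝ) (N n : ℕ) : ℝ := tmesh T r N (n + 1) - tmesh T r N n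

/-- L1 coefficients `T̂_{n,j}` (with the convention `T̂_{n,0} = 0`). -/
noncomputable def That (α T r : ℝ) (N n j : ℕ) : ℝ :=
  if j = 0 then 0 else
    ((tmesh T r N n - tmesh T r N j) ^ (1 - α) -
        (tmesh T r N n - tmesh T r N (j + 1)) ^ (1 - α)) /
      (tau T r N j * Real.Gamma (2 - α))

lemma tmesh_strictmono {T r : ℝ} (hT : 0 < T) (hr : 1 ≤ r) {N m k : ℕ} (hN : 0 < N)
    (hm : 1 ≤ m) (hmk : m < k) : tmesh T r N m < tmesh T r N k := by
  unfold tmesh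
  have hN' : (0 : ℝ) < N := by exact_mod_cast hN
  have h1 : (0 : ℝ) ≤ ((m : ℝ) - 1) / N := by
    apply div_nonneg _ hN'.le
    have : (1 : ℝ) ≤ m := by exact_mod_cast hm
    linarith
  have h2 : ((m : ℝ) - 1) / N < ((k : ℝ) - 1) / N := by
    have : (m : ℝ) < k := by exact_mod_cast hmk
    gcongr
  have hr0 : 0 < r := lt_of_lt_of_le one_pos hr
  exact mul_lt_mul_of_pos_left (Real.rpow_lt_rpow h1 h2 hr0) hT

lemma key_ineq {p a b c d G : ℝ} (hp0 : 0 ≤ p) (hp1 : p ≤ 1)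
    (hab : a < b) (hbc : b < c) (hcd : c ≤ d) (hG : 0 < G) :
    ((d - a) ^ p - (d - b) ^ p) / ((b - a) * G) ≤
      ((d - b) ^ p - (d - c) ^ p) / ((c - b) * G) := by
  have hconc := Real.concaveOn_rpow hp0 hp1
  have hx : d - c ∈ Set.Ici (0 : ℝ) := by simp; linarith
  have hz : d - a ∈ Set.Ici (0 : ℝ) := by simp; linarith
  have key := hconc.slope_anti_adjacent hx hz
    (show d - c < d - b by linarith) (show d - b < d - a by linarith)
  rw [show d - a - (d - b) = b - a by ring, show d - b - (d - c) = c - b by ring] at key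
  rw [← div_div, ← div_div]
  exact div_le_div_of_nonneg_right key hG.le |>.trans_eq rfl

/-- monotonicity of the L1 coefficients in the second index:
`T̂_{n,j} ≥ T̂_{n,j-1}` for `2 ≤ j ≤ n-1`, `2 ≤ n ≤ N+1`. -/
theorem That_monotone (α T r : ℝ) (hα : α ∈ Set.Ioo (0 : ℝ) 1) (hT : 0 < T)
    (hr : 1 ≤ r) (N : ℕ) (hN : 0 < N) (n : ℕ) (hn2 : 2 ≤ n) (hnN : n ≤ N + 1) :
    ∀ j, 2 ≤ j → j ≤ n - 1 → That α T r N n (j - 1) ≤ That α T r N n j := by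
  intro j hj2 hjn
  obtain ⟨hα0, hα1⟩ := hα
  have hjadd : j - 1 + 1 = j := by omega
  have hj1n : j + 1 ≤ n := by omega
  have hab : tmesh T r N (j - 1) < tmesh T r N j :=
    tmesh_strictmono hT hr hN (by omega) (by omega)
  have hbc : tmesh T r N j < tmesh T r N (j + 1) :=
    tmesh_strictmono hT hr hN (by omega) (by omega)
  have hcd : tmesh T r N (j + 1) ≤ tmesh T r N n := by
    rcases eq_or_lt_of_le hj1n with h | h
    · rw [h]
    · exact (tmesh_strictmono hT hr hN (by omega) h).le
  have hG : 0 < Real.Gamma (2 - α) := Real.Gamma_pos_of_pos (by linarith)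
  rw [That, That, if_neg (by omega), if_neg (by omega), hjadd, tau, tau, hjadd]
  exact key_ineq (by linarith) (by linarith) hab hbc hcd hG
end

section
/- For every n with 2 ≤ n ≤ N+1 and every j with 1 ≤ j ≤ n, the multiplier θ_{n,j} defined by the recursion θ_{n,n} = 1 and θ_{n,j} = Σ_{k=1}^{n−j} τ_{n−k}^α θ_{n−k,j} (T̂_{n,n−k} − T̂_{n,n−k−1}) is strictly positive. -/
/-- The multipliers `θ_{n,j}`: `θ_{n,n} = 1` and
`θ_{n,j} = Σ_{k=1}^{n-j} τ_{n-k}^α θ_{n-k,j} (T̂_{n,n-k} - T̂_{n,n-k-1})`. -/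
noncomputable def theta (α T r : ℝ) (N : ℕ) : ℕ → ℕ → ℝ
  | n, j =>
    if n = j then 1
    else
      ∑ k ∈ (Finset.Icc 1 (n - j)).attach,
        tau T r N (n - k.1) ^ α * theta α T r N (n - k.1) j *
          (That α T r N n (n - k.1) - That α T r N n (n - k.1 - 1))
  termination_by n j => n
  decreasing_by
    have hk := Finset.mem_Icc.mp k.2
    omega


section aux
variable {α T r : ℝ} {N : ℕ}

lemma tmesh_lt_aux (hT : 0 < T) (hr : 1 ≤ r) (hN : 0 < N) {m n : ℕ} (hm : 1 ≤ m) (hmn : m < n) :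
    tmesh T r N m < tmesh T r N n := by
  unfold tmesh
  have hN' : (0:ℝ) < N := by exact_mod_cast hN
  have h1 : (1:ℝ) ≤ m := by exact_mod_cast hm
  have h2 : (m:ℝ) < n := by exact_mod_cast hmn
  apply mul_lt_mul_of_pos_left _ hT
  apply Real.rpow_lt_rpow (div_nonneg (by linarith) hN'.le) _ (by linarith)
  gcongr <;> linarith

lemma tau_pos_aux (hT : 0 < T) (hr : 1 ≤ r) (hN : 0 < N) {m : ℕ} (hm : 1 ≤ m) :
    0 < tau T r N m :=
  sub_pos.mpr (tmesh_lt_aux hT hr hN hm (Nat.lt_succ_self m))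

lemma That_pos_aux (hα : α ∈ Set.Ioo (0 : ℝ) 1) (hT : 0 < T) (hr : 1 ≤ r) (hN : 0 < N)
    {n j : ℕ} (hj : 1 ≤ j) (hjn : j + 1 ≤ n) : 0 < That α T r N n j := by
  obtain ⟨hα0, hα1⟩ := hα
  rw [That, if_neg (by omega)]
  have hG : 0 < Real.Gamma (2 - α) := Real.Gamma_pos_of_pos (by linarith)
  have hτ : 0 < tau T r N j := tau_pos_aux hT hr hN hj
  apply div_pos _ (mul_pos hτ hG)
  have hb : tmesh T r N (j+1) ≤ tmesh T r N n := by
    rcases eq_or_lt_of_le hjn with h | h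
    · rw [h]
    · exact (tmesh_lt_aux hT hr hN (by omega) h).le
  have ha : tmesh T r N j < tmesh T r N (j+1) := tmesh_lt_aux hT hr hN hj (Nat.lt_succ_self j)
  have := Real.rpow_lt_rpow (x := tmesh T r N n - tmesh T r N (j+1))
    (y := tmesh T r N n - tmesh T r N j) (by linarith) (by linarith) (z := 1 - α) (by linarith)
  linarith

lemma That_lt_aux (hα : α ∈ Set.Ioo (0 : ℝ) 1) (hT : 0 < T) (hr : 1 ≤ r) (hN : 0 < N)
    {n j : ℕ} (hj : 1 ≤ j) (hjn : j + 2 ≤ n) : That α T r N n j < That α T r N n (j+1) := by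
  obtain ⟨hα0, hα1⟩ := hα
  rw [That, That, if_neg (by omega), if_neg (by omega)]
  have hG : 0 < Real.Gamma (2 - α) := Real.Gamma_pos_of_pos (by linarith)
  set f : ℝ → ℝ := fun x => x ^ (1 - α) with hf
  have hcc : StrictConcaveOn ℝ (Set.Ici 0) f := Real.strictConcaveOn_rpow (by linarith) (by linarith)
  set a := tmesh T r N n - tmesh T r N j
  set b := tmesh T r N n - tmesh T r N (j+1)
  set c := tmesh T r N n - tmesh T r N (j+2)
  have hc0 : 0 ≤ c := by
    rcases eq_or_lt_of_le hjn with h | h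
    · simp [c, h]
    · have := tmesh_lt_aux hT hr hN (m := j+2) (by omega) h
      dsimp [c]; linarith
  have hcb : c < b := by
    have := tmesh_lt_aux hT hr hN (m := j+1) (by omega) (Nat.lt_succ_self (j+1))
    dsimp [b, c]; linarith
  have hba : b < a := by
    have := tmesh_lt_aux hT hr hN (m := j) hj (Nat.lt_succ_self j)
    dsimp [a, b]; linarith
  have hslope := hcc.slope_anti_adjacent (x := c) (y := b) (z := a)
    hc0 (by exact Set.mem_Ici.mpr (by linarith)) hcb hba
  have hτj : tau T r N j = a - b := by dsimp [a, b, tau]; ring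
  have hτj1 : tau T r N (j+1) = b - c := by dsimp [b, c, tau]; ring
  rw [hτj, hτj1]
  rw [div_mul_eq_div_div, div_mul_eq_div_div]
  exact (div_lt_div_iff_of_pos_right hG).mpr hslope

end aux

lemma theta_pos_aux (α T r : ℝ) (hα : α ∈ Set.Ioo (0 : ℝ) 1) (hT : 0 < T)
    (hr : 1 ≤ r) (N : ℕ) (hN : 0 < N) :
    ∀ n, ∀ j, 1 ≤ j → j ≤ n → 0 < theta α T r N n j := by
  intro n
  induction n using Nat.strong_induction_on with
  | _ n ih =>
    intro j hj hjn
    rcases eq_or_lt_of_le hjn with h | h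
    · rw [theta, if_pos h.symm]; norm_num
    · rw [theta, if_neg (by omega)]
      apply Finset.sum_pos
      · intro k _
        have hk' := Finset.mem_Icc.mp k.2
        have hm1 : j ≤ n - k.1 := by omega
        have hm2 : n - k.1 < n := by omega
        refine mul_pos (mul_pos ?_ ?_) ?_
        · exact Real.rpow_pos_of_pos (tau_pos_aux hT hr hN (by omega)) α
        · exact ih _ hm2 j hj hm1
        · rcases Nat.eq_or_lt_of_le (show 1 ≤ n - k.1 by omega) with h1 | h1
          · rw [← h1]
            have h0 : That α T r N n (1 - 1) = 0 := by rw [That]; simp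
            rw [h0, sub_zero]
            exact That_pos_aux hα hT hr hN le_rfl (by omega)
          · have hrw : n - k.1 - 1 + 1 = n - k.1 := by omega
            have := That_lt_aux hα hT hr hN (n := n) (j := n - k.1 - 1) (by omega) (by omega)
            rw [hrw] at this
            linarith
      · exact Finset.attach_nonempty_iff.mpr (Finset.nonempty_Icc.mpr (by omega))


/-- the multipliers `θ_{n,j}` are strictly positive for
`2 ≤ n ≤ N+1` and `1 ≤ j ≤ n`. -/
theorem theta_pos (α T r : ℝ) (hα : α ∈ Set.Ioo (0 : ℝ) 1) (hT : 0 < T)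
    (hr : 1 ≤ r) (N : ℕ) (hN : 0 < N) :
    ∀ n, 2 ≤ n → n ≤ N + 1 → ∀ j, 1 ≤ j → j ≤ n → 0 < theta α T r N n j := by
  intro n _ _ j hj hjn
  exact theta_pos_aux α T r hα hT hr N hN n j hj hjn
end

section
/- Suppose nonnegative real numbers a_1, a_2, …, a_{N+1} and f_2, …, f_{N+1} satisfy, for every n with 2 ≤ n ≤ N+1, the recursive inequality T̂_{n,n−1} a_n ≤ f_n + T̂_{n,1} a_1 + Σ_{j=2}^{n−1} (T̂_{n,j} − T̂_{n,j−1}) a_j. Then for every n with 2 ≤ n ≤ N+1 one has the discrete Grönwall-type bound a_n ≤ a_1 + Γ(2−α) τ_{n−1}^α Σ_{j=2}^n θ_{n,j} f_j. -/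
section Helpers

variable {α T r : ℝ} {N : ℕ}

lemma tmesh_le (hT : 0 < T) (hr : 1 ≤ r) (hN : 0 < N) {j k : ℕ} (hj : 1 ≤ j) (hjk : j ≤ k) :
    tmesh T r N j ≤ tmesh T r N k := by
  unfold tmesh
  have h1 : (0:ℝ) ≤ ((j:ℝ) - 1) / N := by
    have : (1:ℝ) ≤ (j:ℝ) := by exact_mod_cast hj
    have : (0:ℝ) ≤ (j:ℝ) - 1 := by linarith
    positivity
  have hNpos : (0:ℝ) < N := by exact_mod_cast hN
  have h2 : ((j:ℝ) - 1) / N ≤ ((k:ℝ) - 1) / N := by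
    have : (j:ℝ) ≤ (k:ℝ) := by exact_mod_cast hjk
    exact div_le_div_of_nonneg_right (by linarith) hNpos.le |>.trans_eq rfl
  exact mul_le_mul_of_nonneg_left (Real.rpow_le_rpow h1 h2 (by linarith)) hT.le

lemma tau_pos (hT : 0 < T) (hr : 1 ≤ r) (hN : 0 < N) {j : ℕ} (hj : 1 ≤ j) :
    0 < tau T r N j := by
  unfold tau tmesh
  have hNpos : (0:ℝ) < N := by exact_mod_cast hN
  have h0 : (0:ℝ) ≤ ((j:ℝ) - 1) / N := by
    have : (1:ℝ) ≤ (j:ℝ) := by exact_mod_cast hj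
    have : (0:ℝ) ≤ (j:ℝ) - 1 := by linarith
    positivity
  have h1 : ((j:ℝ) - 1) / N < (((j+1:ℕ):ℝ) - 1) / N := by
    push_cast
    rw [div_lt_div_iff_of_pos_right hNpos]
    linarith
  have := Real.rpow_lt_rpow h0 h1 (by linarith : (0:ℝ) < r)
  nlinarith [this]

lemma tau_nonneg (hT : 0 < T) (hr : 1 ≤ r) (hN : 0 < N) {j : ℕ} (hj : 1 ≤ j) :
    0 ≤ tau T r N j := (tau_pos hT hr hN hj).le

lemma tau_mono (hT : 0 < T) (hr : 1 ≤ r) (hN : 0 < N) {j : ℕ} (hj : 2 ≤ j) :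
    tau T r N (j - 1) ≤ tau T r N j := by
  have hNpos : (0:ℝ) < N := by exact_mod_cast hN
  have hcv := (convexOn_rpow hr).slope_mono_adjacent
    (x := ((j:ℝ) - 2) / N) (y := ((j:ℝ) - 1) / N) (z := (j:ℝ) / N)
    (by
      have : (2:ℝ) ≤ (j:ℝ) := by exact_mod_cast hj
      have : (0:ℝ) ≤ (j:ℝ) - 2 := by linarith
      exact Set.mem_Ici.mpr (by positivity))
    (by
      have : (0:ℝ) ≤ (j:ℝ) := Nat.cast_nonneg j
      exact Set.mem_Ici.mpr (by positivity))
    ((div_lt_div_iff_of_pos_right hNpos).mpr (by linarith))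
    ((div_lt_div_iff_of_pos_right hNpos).mpr (by linarith))
  have hyx : ((j:ℝ) - 1) / N - ((j:ℝ) - 2) / N = 1 / N := by
    rw [div_sub_div_same]; norm_num
  have hzy : (j:ℝ) / N - ((j:ℝ) - 1) / N = 1 / N := by
    rw [div_sub_div_same]; norm_num
  rw [hyx, hzy, div_le_div_iff_of_pos_right (by positivity : (0:ℝ) < 1 / N)] at hcv
  have hj1 : ((j - 1 : ℕ):ℝ) = (j:ℝ) - 1 := by
    have : 1 ≤ j := by omega
    push_cast [this]; ring
  have hj11 : j - 1 + 1 = j := by omega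
  unfold tau tmesh
  rw [hj11]
  push_cast [hj1]
  have e1 : ((j:ℝ) - 1 - 1) = (j:ℝ) - 2 := by ring
  have e2 : ((j:ℝ) + 1 - 1) = (j:ℝ) := by ring
  rw [e1, e2]
  have key := mul_le_mul_of_nonneg_left hcv hT.le
  nlinarith [key]

end Helpers

section Helpers2

variable {α T r : ℝ} {N : ℕ}

lemma Gamma_pos' (hα : α ∈ Set.Ioo (0:ℝ) 1) : 0 < Real.Gamma (2 - α) :=
  Real.Gamma_pos_of_pos (by linarith [hα.1, hα.2])

lemma Gamma_le_one' (hα : α ∈ Set.Ioo (0:ℝ) 1) : Real.Gamma (2 - α) ≤ 1 := by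
  obtain ⟨h0, h1⟩ := hα
  have := Real.convexOn_Gamma.2 (Set.mem_Ioi.mpr one_pos)
    (Set.mem_Ioi.mpr two_pos) h0.le (by linarith : (0:ℝ) ≤ 1 - α) (by ring)
  simp only [smul_eq_mul, mul_one, Real.Gamma_one, Real.Gamma_two] at this
  calc Real.Gamma (2 - α) = Real.Gamma (α * 1 + (1 - α) * 2) := by ring_nf
    _ ≤ α * 1 + (1 - α) * 1 := by
        rw [mul_one, mul_one]; exact this
    _ = 1 := by ring
  
lemma That_nonneg (hα : α ∈ Set.Ioo (0:ℝ) 1) (hT : 0 < T) (hr : 1 ≤ r) (hN : 0 < N)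
    {n j : ℕ} (hj : 1 ≤ j) (hjn : j + 1 ≤ n) : 0 ≤ That α T r N n j := by
  rw [That, if_neg (by omega : j ≠ 0)]
  apply div_nonneg _ (mul_nonneg (tau_nonneg hT hr hN hj) (Gamma_pos' hα).le)
  have h1 : tmesh T r N (j+1) ≤ tmesh T r N n := tmesh_le hT hr hN (by omega) hjn
  have h2 : tmesh T r N j ≤ tmesh T r N (j+1) := tmesh_le hT hr hN hj (by omega)
  have h3 : (0:ℝ) ≤ tmesh T r N n - tmesh T r N (j+1) := by linarith
  have := Real.rpow_le_rpow h3 (by linarith : tmesh T r N n - tmesh T r N (j+1)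
      ≤ tmesh T r N n - tmesh T r N j) (by linarith [hα.2] : (0:ℝ) ≤ 1 - α)
  linarith

lemma That_mono (hα : α ∈ Set.Ioo (0:ℝ) 1) (hT : 0 < T) (hr : 1 ≤ r) (hN : 0 < N)
    {n j : ℕ} (hj : 2 ≤ j) (hjn : j + 1 ≤ n) :
    That α T r N n (j - 1) ≤ That α T r N n j := by
  obtain ⟨h0, h1⟩ := hα
  set u := tmesh T r N n - tmesh T r N (j+1) with hu
  set v := tmesh T r N n - tmesh T r N j with hv
  set w := tmesh T r N n - tmesh T r N (j-1) with hw
  have hj11 : j - 1 + 1 = j := by omega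
  have hvu : v - u = tau T r N j := by rw [hu, hv]; unfold tau; ring
  have hwv : w - v = tau T r N (j-1) := by
    rw [hv, hw]; unfold tau; rw [hj11]; ring
  have hu0 : 0 ≤ u := sub_nonneg.mpr (tmesh_le hT hr hN (by omega) hjn)
  have huv : u < v := by
    have := tau_pos hT hr hN (show 1 ≤ j by omega) (T := T) (r := r)
    linarith
  have hvw : v < w := by
    have := tau_pos hT hr hN (show 1 ≤ j - 1 by omega) (T := T) (r := r)
    linarith
  have hslope := (Real.concaveOn_rpow (by linarith : (0:ℝ) ≤ 1 - α)
      (by linarith : 1 - α ≤ 1)).slope_anti_adjacent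
      (Set.mem_Ici.mpr hu0) (Set.mem_Ici.mpr (by linarith : (0:ℝ) ≤ w)) huv hvw
  rw [That, if_neg (by omega : j - 1 ≠ 0), That, if_neg (by omega : j ≠ 0), hj11]
  rw [div_le_div_iff₀ (mul_pos (tau_pos hT hr hN (by omega))
    (Gamma_pos' ⟨h0, h1⟩)) (mul_pos (tau_pos hT hr hN (by omega)) (Gamma_pos' ⟨h0, h1⟩))]
  have hG := Gamma_pos' (⟨h0, h1⟩ : α ∈ Set.Ioo (0:ℝ) 1)
  rw [hvu, hwv] at hslope
  rw [div_le_div_iff₀ (by rw [← hwv]; linarith) (by rw [← hvu]; linarith)] at hslope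
  calc (w ^ (1-α) - v ^ (1-α)) * (tau T r N j * Real.Gamma (2-α))
      = ((w ^ (1-α) - v ^ (1-α)) * tau T r N j) * Real.Gamma (2-α) := by ring
    _ ≤ ((v ^ (1-α) - u ^ (1-α)) * tau T r N (j-1)) * Real.Gamma (2-α) := by
        exact mul_le_mul_of_nonneg_right hslope hG.le
    _ = (v ^ (1-α) - u ^ (1-α)) * (tau T r N (j-1) * Real.Gamma (2-α)) := by ring

lemma That_last (hα : α ∈ Set.Ioo (0:ℝ) 1) (hT : 0 < T) (hr : 1 ≤ r) (hN : 0 < N)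
    {n : ℕ} (hn : 2 ≤ n) :
    Real.Gamma (2 - α) * tau T r N (n-1) ^ α * That α T r N n (n - 1) = 1 := by
  have hn11 : n - 1 + 1 = n := by omega
  have htau := tau_pos hT hr hN (show 1 ≤ n - 1 by omega) (T := T) (r := r)
  have hG := Gamma_pos' hα
  rw [That, if_neg (by omega : n - 1 ≠ 0), hn11, sub_self,
    Real.zero_rpow (by linarith [hα.2] : 1 - α ≠ 0)]
  have hmesh : tmesh T r N n - tmesh T r N (n-1) = tau T r N (n-1) := by
    unfold tau; rw [hn11]
  rw [hmesh, sub_zero]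
  rw [show (1:ℝ) - α = 1 + (-α) by ring, Real.rpow_add htau, Real.rpow_one,
    Real.rpow_neg htau.le]
  field_simp

end Helpers2


section Helpers3

variable {α T r : ℝ} {N : ℕ}

lemma theta_diag (n : ℕ) : theta α T r N n n = 1 := by
  rw [theta, if_pos rfl]

lemma theta_eq {n j : ℕ} (hjn : j < n) :
    theta α T r N n j = ∑ m ∈ Finset.Icc j (n-1),
      tau T r N m ^ α * theta α T r N m j * (That α T r N n m - That α T r N n (m-1)) := by
  rw [theta, if_neg (by omega : n ≠ j)]
  rw [Finset.sum_attach (Finset.Icc 1 (n-j)) (fun k =>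
    tau T r N (n - k) ^ α * theta α T r N (n - k) j *
      (That α T r N n (n - k) - That α T r N n (n - k - 1)))]
  refine Finset.sum_nbij' (fun k => n - k) (fun m => n - m) ?_ ?_ ?_ ?_ ?_
  · intro a ha; simp only [Finset.mem_Icc] at *; omega
  · intro a ha; simp only [Finset.mem_Icc] at *; omega
  · intro a ha; simp only [Finset.mem_Icc] at *; omega
  · intro a ha; simp only [Finset.mem_Icc] at *; omega
  · intro a ha; rfl

lemma theta_nonneg (hα : α ∈ Set.Ioo (0:ℝ) 1) (hT : 0 < T) (hr : 1 ≤ r) (hN : 0 < N) :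
    ∀ n j : ℕ, 2 ≤ j → j ≤ n → n ≤ N + 1 → 0 ≤ theta α T r N n j := by
  intro n
  induction n using Nat.strong_induction_on with
  | _ n ih =>
    intro j hj2 hjn hnN
    rcases eq_or_lt_of_le hjn with h | h
    · rw [← h, theta_diag]; norm_num
    · rw [theta_eq h]
      apply Finset.sum_nonneg
      intro m hm
      simp only [Finset.mem_Icc] at hm
      apply mul_nonneg (mul_nonneg _ _)
      · exact sub_nonneg.mpr (That_mono hα hT hr hN (by omega) (by omega))
      · exact Real.rpow_nonneg (tau_nonneg hT hr hN (by omega)) α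
      · exact ih m (by omega) j hj2 hm.1 (by omega)

lemma telescope_Icc (g : ℕ → ℝ) : ∀ m : ℕ,
    ∑ j ∈ Finset.Icc 2 (m+1), (g j - g (j-1)) = g (m+1) - g 1 := by
  intro m
  induction m with
  | zero => simp
  | succ m ih =>
    rw [Finset.sum_Icc_succ_top (by omega : 2 ≤ m + 1 + 1), ih]
    simp

end Helpers3

namespace L1


/-- discrete Grönwall-type inequality.  If nonnegative reals
`a_1,…,a_{N+1}` and `f_2,…,f_{N+1}` satisfy
`T̂_{n,n-1} a_n ≤ f_n + T̂_{n,1} a_1 + Σ_{j=2}^{n-1}(T̂_{n,j} - T̂_{n,j-1}) a_j`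
for `2 ≤ n ≤ N+1`, then
`a_n ≤ a_1 + Γ(2-α) τ_{n-1}^α Σ_{j=2}^n θ_{n,j} f_j`. -/
theorem discrete_gronwall (α T r : ℝ) (hα : α ∈ Set.Ioo (0 : ℝ) 1) (hT : 0 < T)
    (hr : 1 ≤ r) (N : ℕ) (hN : 0 < N) (a f : ℕ → ℝ)
    (ha : ∀ n, 1 ≤ n → n ≤ N + 1 → 0 ≤ a n)
    (hf : ∀ n, 2 ≤ n → n ≤ N + 1 → 0 ≤ f n)
    (hrec : ∀ n, 2 ≤ n → n ≤ N + 1 →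
      That α T r N n (n - 1) * a n ≤
        f n + That α T r N n 1 * a 1 +
          ∑ j ∈ Finset.Icc 2 (n - 1), (That α T r N n j - That α T r N n (j - 1)) * a j) :
    ∀ n, 2 ≤ n → n ≤ N + 1 →
      a n ≤ a 1 + Real.Gamma (2 - α) * tau T r N (n - 1) ^ α *
        ∑ j ∈ Finset.Icc 2 n, theta α T r N n j * f j := by
  intro n
  induction n using Nat.strong_induction_on with
  | _ n ih =>
    intro hn2 hnN
    have hG : 0 < Real.Gamma (2 - α) := Gamma_pos' hα
    have hG1 : Real.Gamma (2 - α) ≤ 1 := Gamma_le_one' hα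
    have htauP : 0 < tau T r N (n - 1) := tau_pos hT hr hN (by omega)
    have hc : 0 < Real.Gamma (2 - α) * tau T r N (n - 1) ^ α :=
      mul_pos hG (Real.rpow_pos_of_pos htauP α)
    have hc1 : Real.Gamma (2 - α) * tau T r N (n - 1) ^ α * That α T r N n (n - 1) = 1 :=
      That_last hα hT hr hN hn2
    have hS : ∀ j, 2 ≤ j → j ≤ N + 1 →
        0 ≤ ∑ i ∈ Finset.Icc 2 j, theta α T r N j i * f i := by
      intro j hj2 hjN
      apply Finset.sum_nonneg
      intro i hi
      simp only [Finset.mem_Icc] at hi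
      exact mul_nonneg (theta_nonneg hα hT hr hN j i hi.1 hi.2 hjN)
        (hf i hi.1 (by omega))
    have hstep : ∀ j ∈ Finset.Icc 2 (n - 1),
        (That α T r N n j - That α T r N n (j - 1)) * a j ≤
          (That α T r N n j - That α T r N n (j - 1)) * a 1 +
          (That α T r N n j - That α T r N n (j - 1)) *
            (tau T r N j ^ α * ∑ i ∈ Finset.Icc 2 j, theta α T r N j i * f i) := by
      intro j hj
      simp only [Finset.mem_Icc] at hj
      have hΔ : 0 ≤ That α T r N n j - That α T r N n (j - 1) :=
        sub_nonneg.mpr (That_mono hα hT hr hN hj.1 (by omega))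
      have hIH := ih j (by omega) hj.1 (by omega)
      have hτ1 : (0:ℝ) ≤ tau T r N (j - 1) ^ α :=
        Real.rpow_nonneg (tau_nonneg hT hr hN (by omega)) α
      have hGc : Real.Gamma (2 - α) * tau T r N (j - 1) ^ α *
            (∑ i ∈ Finset.Icc 2 j, theta α T r N j i * f i) ≤
          tau T r N j ^ α * (∑ i ∈ Finset.Icc 2 j, theta α T r N j i * f i) := by
        refine mul_le_mul_of_nonneg_right ?_ (hS j hj.1 (by omega))
        calc Real.Gamma (2 - α) * tau T r N (j - 1) ^ α ≤ 1 * tau T r N (j - 1) ^ α :=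
              mul_le_mul_of_nonneg_right hG1 hτ1
          _ = tau T r N (j - 1) ^ α := one_mul _
          _ ≤ tau T r N j ^ α :=
              Real.rpow_le_rpow (tau_nonneg hT hr hN (by omega))
                (tau_mono hT hr hN hj.1) hα.1.le
      calc (That α T r N n j - That α T r N n (j - 1)) * a j
          ≤ (That α T r N n j - That α T r N n (j - 1)) *
              (a 1 + Real.Gamma (2 - α) * tau T r N (j - 1) ^ α *
                ∑ i ∈ Finset.Icc 2 j, theta α T r N j i * f i) :=
            mul_le_mul_of_nonneg_left hIH hΔ
        _ = (That α T r N n j - That α T r N n (j - 1)) * a 1 +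
              (That α T r N n j - That α T r N n (j - 1)) *
                (Real.Gamma (2 - α) * tau T r N (j - 1) ^ α *
                  ∑ i ∈ Finset.Icc 2 j, theta α T r N j i * f i) := by ring
        _ ≤ _ := by
            have := mul_le_mul_of_nonneg_left hGc hΔ
            linarith
    have htel : ∑ j ∈ Finset.Icc 2 (n - 1), (That α T r N n j - That α T r N n (j - 1))
        = That α T r N n (n - 1) - That α T r N n 1 := by
      have h := telescope_Icc (fun j => That α T r N n j) (n - 2)
      have h2 : n - 2 + 1 = n - 1 := by omega
      rw [h2] at h
      exact h
    have hQ : (∑ j ∈ Finset.Icc 2 (n - 1), (That α T r N n j - That α T r N n (j - 1)) *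
          (tau T r N j ^ α * ∑ i ∈ Finset.Icc 2 j, theta α T r N j i * f i))
        = ∑ i ∈ Finset.Icc 2 (n - 1), theta α T r N n i * f i := by
      calc (∑ j ∈ Finset.Icc 2 (n - 1), (That α T r N n j - That α T r N n (j - 1)) *
                (tau T r N j ^ α * ∑ i ∈ Finset.Icc 2 j, theta α T r N j i * f i))
          = ∑ j ∈ Finset.Icc 2 (n - 1), ∑ i ∈ Finset.Icc 2 j,
              (tau T r N j ^ α * theta α T r N j i *
                (That α T r N n j - That α T r N n (j - 1))) * f i := by
            refine Finset.sum_congr rfl fun j _ => ?_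
            rw [Finset.mul_sum, Finset.mul_sum]
            exact Finset.sum_congr rfl fun i _ => by ring
        _ = ∑ i ∈ Finset.Icc 2 (n - 1), ∑ j ∈ Finset.Icc i (n - 1),
              (tau T r N j ^ α * theta α T r N j i *
                (That α T r N n j - That α T r N n (j - 1))) * f i := by
            refine Finset.sum_comm' ?_
            intro x y
            simp only [Finset.mem_Icc]
            omega
        _ = ∑ i ∈ Finset.Icc 2 (n - 1), theta α T r N n i * f i := by
            refine Finset.sum_congr rfl fun i hi => ?_
            simp only [Finset.mem_Icc] at hi
            rw [← Finset.sum_mul, ← theta_eq (by omega : i < n)]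
    have hsplit : ∑ j ∈ Finset.Icc 2 n, theta α T r N n j * f j
        = (∑ j ∈ Finset.Icc 2 (n - 1), theta α T r N n j * f j) + theta α T r N n n * f n := by
      have h : n = n - 1 + 1 := by omega
      rw [h, Finset.sum_Icc_succ_top (by omega : 2 ≤ n - 1 + 1)]
      rw [← h]
    have key := hrec n hn2 hnN
    have hsum : ∑ j ∈ Finset.Icc 2 (n - 1), (That α T r N n j - That α T r N n (j - 1)) * a j
        ≤ (That α T r N n (n - 1) - That α T r N n 1) * a 1 +
          ∑ i ∈ Finset.Icc 2 (n - 1), theta α T r N n i * f i := by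
      calc ∑ j ∈ Finset.Icc 2 (n - 1), (That α T r N n j - That α T r N n (j - 1)) * a j
          ≤ ∑ j ∈ Finset.Icc 2 (n - 1),
              ((That α T r N n j - That α T r N n (j - 1)) * a 1 +
               (That α T r N n j - That α T r N n (j - 1)) *
                 (tau T r N j ^ α * ∑ i ∈ Finset.Icc 2 j, theta α T r N j i * f i)) :=
            Finset.sum_le_sum hstep
        _ = (∑ j ∈ Finset.Icc 2 (n - 1), (That α T r N n j - That α T r N n (j - 1))) * a 1 +
              ∑ j ∈ Finset.Icc 2 (n - 1), (That α T r N n j - That α T r N n (j - 1)) *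
                (tau T r N j ^ α * ∑ i ∈ Finset.Icc 2 j, theta α T r N j i * f i) := by
            rw [Finset.sum_add_distrib, Finset.sum_mul]
        _ = _ := by rw [htel, hQ]
    have h2 : a n = Real.Gamma (2 - α) * tau T r N (n - 1) ^ α * (That α T r N n (n - 1) * a n) := by
      rw [← mul_assoc, hc1, one_mul]
    rw [h2]
    calc Real.Gamma (2 - α) * tau T r N (n - 1) ^ α * (That α T r N n (n - 1) * a n)
        ≤ Real.Gamma (2 - α) * tau T r N (n - 1) ^ α *
            (f n + That α T r N n 1 * a 1 +
              ((That α T r N n (n - 1) - That α T r N n 1) * a 1 +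
                ∑ i ∈ Finset.Icc 2 (n - 1), theta α T r N n i * f i)) := by
          refine mul_le_mul_of_nonneg_left ?_ hc.le
          linarith [key, hsum]
      _ = Real.Gamma (2 - α) * tau T r N (n - 1) ^ α * That α T r N n (n - 1) * a 1 +
            Real.Gamma (2 - α) * tau T r N (n - 1) ^ α *
              (f n + ∑ i ∈ Finset.Icc 2 (n - 1), theta α T r N n i * f i) := by ring
      _ = a 1 + Real.Gamma (2 - α) * tau T r N (n - 1) ^ α *
            (f n + ∑ i ∈ Finset.Icc 2 (n - 1), theta α T r N n i * f i) := by
          rw [hc1, one_mul]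
      _ = a 1 + Real.Gamma (2 - α) * tau T r N (n - 1) ^ α *
            ∑ j ∈ Finset.Icc 2 n, theta α T r N n j * f j := by
          rw [hsplit, theta_diag]
          ring
end L1
end
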